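/- Let f : [ℓ,u] → ℝ be L_f-Lipschitz. Let the coarse uniform grid on [ℓ,u] have I ≥ 2 points and the fine uniform grid have J = 2I − 1 points. Let x*_fine ∈ ℝ^J and x*_coarse ∈ ℝ^I be the exact samples of f on the fine and coarse grids respectively, and let x = midpoint linear interpolation of x*_coarse ∈ ℝ^J. Then ‖x − x*_fine‖₂ ≤ L_f·(u − ℓ)/(2·√(I − 1)). -/

import Mathlib

open Finset

/-- Uniform grid with `I` points on `[l, u]` (0-indexed): `t[i] = l + i·(u−l)/(I−1)`. -/
noncomputable def unifGrid (l u : ℝ) (I : ℕ) (i : ℕ) : ℝ := l + i * (u - l) / ((I : ℝ) - 1)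

/-- Midpoint linear interpolation (0-indexed): even entries copy `x`, odd entries are midpoints. -/
noncomputable def midInterp (x : ℕ → ℝ) (j : ℕ) : ℝ :=
  if j % 2 = 0 then x (j / 2) else (x (j / 2) + x (j / 2 + 1)) / 2

/-- Exact interpolation error bound. -/
theorem exact_interpolation
    (l u : ℝ) (hlu : l < u) (I : ℕ) (hI : 2 ≤ I)
    (f : ℝ → ℝ) (Lf : ℝ)
    (hfLip : ∀ s ∈ Set.Icc l u, ∀ t ∈ Set.Icc l u, |f s - f t| ≤ Lf * |s - t|)
    (xcoarse xfine : ℕ → ℝ)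
    (hxc : ∀ i < I, xcoarse i = f (unifGrid l u I i))
    (hxf : ∀ j < 2 * I - 1, xfine j = f (unifGrid l u (2 * I - 1) j)) :
    Real.sqrt (∑ j ∈ range (2 * I - 1), (midInterp xcoarse j - xfine j) ^ 2) ≤
      Lf * (u - l) / (2 * Real.sqrt ((I : ℝ) - 1)) := by
  obtain ⟨n, rfl⟩ : ∃ n, I = n + 1 := ⟨I - 1, by omega⟩
  have hn : 1 ≤ n := by omega
  have hn0 : (0:ℝ) < (n:ℝ) := by exact_mod_cast hn
  have hul : (0:ℝ) < u - l := sub_pos.2 hlu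
  have hLf : 0 ≤ Lf := by
    have h1 := hfLip l ⟨le_refl l, hlu.le⟩ u ⟨hlu.le, le_refl u⟩
    rw [abs_sub_comm l u, abs_of_pos hul] at h1
    nlinarith [abs_nonneg (f l - f u)]
  set B := Lf * (u - l) / (2 * n) with hB
  have hBnn : 0 ≤ B := by positivity
  have h2I : 2 * (n + 1) - 1 = 2 * n + 1 := by omega
  -- membership lemma
  have hmem : ∀ (m k : ℕ), 0 < m → k ≤ m → l + k * (u - l) / m ∈ Set.Icc l u := by
    intro m k hm hk
    have hm' : (0:ℝ) < m := by exact_mod_cast hm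
    have hk' : (k:ℝ) ≤ m := by exact_mod_cast hk
    have hk0 : (0:ℝ) ≤ (k:ℝ) := Nat.cast_nonneg k
    constructor
    · have : (0:ℝ) ≤ k * (u - l) / m := by positivity
      linarith
    · have : (k:ℝ) * (u - l) / m ≤ u - l := by
        rw [div_le_iff₀ hm']; nlinarith
      linarith
  have hcoarse : ∀ i, i ≤ n → unifGrid l u (n+1) i = l + i * (u - l) / n := by
    intro i _
    simp [unifGrid]
  have hfine : ∀ j, unifGrid l u (2*(n+1)-1) j = l + j * (u - l) / (2*n) := by
    intro j
    rw [h2I]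
    simp [unifGrid]
  set e : ℕ → ℝ := fun j => (midInterp xcoarse j - xfine j) ^ 2 with he
  have heven : ∀ i, i ≤ n → e (2*i) = 0 := by
    intro i hi
    have h1 : midInterp xcoarse (2*i) = xcoarse i := by
      simp [midInterp, Nat.mul_div_cancel_left, Nat.mul_mod_right]
    have h2 : xcoarse i = f (l + i * (u - l) / n) := by
      rw [hxc i (by omega), hcoarse i hi]
    have h3 : xfine (2*i) = f (l + (2*i : ℕ) * (u - l) / (2*n)) := by
      rw [hxf (2*i) (by omega), hfine]
    have h4 : ((2*i : ℕ):ℝ) * (u - l) / (2*n) = (i:ℝ) * (u - l) / n := by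
      push_cast
      field_simp
    have h5 : l + ((2*i : ℕ):ℝ) * (u - l) / (2*n) = l + (i:ℝ) * (u - l) / n := by rw [h4]
    simp only [he]
    rw [h1, h2, h3, h5, sub_self]
    norm_num
  have hodd : ∀ i, i < n → e (2*i+1) ≤ B ^ 2 := by
    intro i hi
    have h1 : midInterp xcoarse (2*i+1) = (xcoarse i + xcoarse (i+1)) / 2 := by
      have : (2*i+1) % 2 = 1 := by omega
      have h2 : (2*i+1) / 2 = i := by omega
      simp [midInterp, this, h2]
    have ha : xcoarse i = f (l + i * (u - l) / n) := by
      rw [hxc i (by omega), hcoarse i (by omega)]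
    have hb : xcoarse (i+1) = f (l + (i+1:ℕ) * (u - l) / n) := by
      rw [hxc (i+1) (by omega), hcoarse (i+1) (by omega)]
    have hm : xfine (2*i+1) = f (l + (2*i+1 : ℕ) * (u - l) / (2*n)) := by
      rw [hxf (2*i+1) (by omega), hfine]
    set a := l + (i:ℝ) * (u - l) / n with hA
    set b := l + ((i+1:ℕ):ℝ) * (u - l) / n with hBB
    set m := l + ((2*i+1 : ℕ):ℝ) * (u - l) / (2*n) with hM
    have hamem : a ∈ Set.Icc l u := hmem n i hn (by omega)
    have hbmem : b ∈ Set.Icc l u := hmem n (i+1) hn (by omega)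
    have hmmem : m ∈ Set.Icc l u := by
      have h := hmem (2*n) (2*i+1) (by omega) (by omega)
      push_cast at h
      rw [hM]; push_cast
      convert h using 3 <;> ring
    have ham : a - m = -((u - l) / (2*n)) := by
      rw [hA, hM]; push_cast; field_simp; ring
    have hbm : b - m = (u - l) / (2*n) := by
      rw [hBB, hM]; push_cast; field_simp; ring
    have l1 := hfLip a hamem m hmmem
    have l2 := hfLip b hbmem m hmmem
    rw [ham] at l1
    rw [hbm] at l2
    have habs : |(u - l) / (2*n)| = (u - l) / (2*n) := abs_of_pos (by positivity)
    rw [abs_neg, habs] at l1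
    rw [habs] at l2
    have hdiff : |midInterp xcoarse (2*i+1) - xfine (2*i+1)| ≤ B := by
      rw [h1, ha, hb, hm]
      have : (f a + f b) / 2 - f m = ((f a - f m) + (f b - f m)) / 2 := by ring
      rw [this, hB]
      calc |((f a - f m) + (f b - f m)) / 2| ≤ (|f a - f m| + |f b - f m|) / 2 := by
            rw [abs_div, abs_two]
            have := abs_add_le (f a - f m) (f b - f m)
            linarith
        _ ≤ (Lf * ((u - l) / (2*n)) + Lf * ((u - l) / (2*n))) / 2 := by linarith
        _ = Lf * (u - l) / (2 * n) := by ring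
    calc e (2*i+1) = |midInterp xcoarse (2*i+1) - xfine (2*i+1)| ^ 2 := by
          rw [he]; rw [sq_abs]
      _ ≤ B ^ 2 := by
          apply pow_le_pow_left₀ (abs_nonneg _) hdiff
  have sumlem : ∀ N : ℕ, N ≤ n → ∑ j ∈ range (2*N+1), e j ≤ N * B^2 := by
    intro N
    induction N with
    | zero => intro _; simp [heven 0 (by omega)]
    | succ k ih =>
      intro hk
      have h1 : 2*(k+1)+1 = (2*k+1) + 1 + 1 := by omega
      rw [h1, Finset.sum_range_succ, Finset.sum_range_succ]
      have h2 : (2*k+1)+1 = 2*(k+1) := by omega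
      rw [h2]
      have h3 := heven (k+1) (by omega)
      have h4 := hodd k (by omega)
      have h5 := ih (by omega)
      push_cast
      linarith
  have hsum := sumlem n le_rfl
  rw [h2I]
  rw [show ((n+1:ℕ):ℝ) - 1 = (n:ℝ) from by push_cast; ring]
  have hgoal : Real.sqrt ((n:ℝ) * B^2) = Lf * (u - l) / (2 * Real.sqrt (n:ℝ)) := by
    rw [Real.sqrt_mul (le_of_lt hn0), Real.sqrt_sq hBnn]
    have hsn : Real.sqrt n > 0 := Real.sqrt_pos.2 hn0
    have hnn : Real.sqrt n * Real.sqrt n = (n:ℝ) := Real.mul_self_sqrt (le_of_lt hn0)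
    rw [hB]
    field_simp
    linear_combination Lf * hnn
  calc Real.sqrt (∑ j ∈ range (2*n+1), (midInterp xcoarse j - xfine j) ^ 2)
      ≤ Real.sqrt ((n:ℝ) * B^2) := Real.sqrt_le_sqrt hsum
    _ = _ := hgoal
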